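/- arXiv:1509.01859 — 2 statements merged into one kernel-verified Lean document; each statement's English description precedes it below -/
import Mathlib

section
/- The two-sided sequence x : ℤ → ℝ defined by x_n = 1/n for n ≠ 0 and x_0 = 0 is not rankable; that is, there exists no bijection P : ℤ → ℤ such that x_{P(k)} ≤ x_{P(l)} whenever k ≤ l. -/
/-- The two-sided sequence `x n = 1/n` for `n ≠ 0`, `x 0 = 0`, is not rankable. -/
theorem stmt_0 :
    ¬ ∃ P : ℤ ≃ ℤ, ∀ k l : ℤ, k ≤ l →
      (fun n : ℤ => if n = 0 then (0 : ℝ) else (n : ℝ)⁻¹) (P k) ≤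
      (fun n : ℤ => if n = 0 then (0 : ℝ) else (n : ℝ)⁻¹) (P l) := by
  rintro ⟨P, h⟩
  set k0 := P.symm 0 with hk0
  have hPk0 : P k0 = 0 := P.apply_symm_apply 0
  -- everything strictly after k0 maps to a positive integer
  have hA : ∀ k : ℤ, k0 < k → 0 < P k := by
    intro k hk
    have h1 := h k0 k hk.le
    simp only [hPk0] at h1
    have hne : P k ≠ 0 := by
      intro he
      have : k = k0 := P.injective (he.trans hPk0.symm)
      omega
    rw [if_neg hne] at h1
    simp only [if_true, eq_self_iff_true] at h1
    rcases lt_trichotomy (P k) 0 with hlt | heq | hgt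
    · have : ((P k : ℝ))⁻¹ < 0 := inv_lt_zero.mpr (by exact_mod_cast hlt)
      linarith
    · exact absurd heq hne
    · exact hgt
  -- and is strictly decreasing there
  have hB : ∀ k : ℤ, k0 < k → P (k + 1) < P k := by
    intro k hk
    have hpk := hA k hk
    have hpk1 := hA (k + 1) (by omega)
    have h1 := h k (k + 1) (by omega)
    simp only [if_neg hpk.ne', if_neg hpk1.ne'] at h1
    have hle : P (k + 1) ≤ P k := by
      have := (inv_le_inv₀ (by exact_mod_cast hpk : (0:ℝ) < (P k : ℝ))
        (by exact_mod_cast hpk1 : (0:ℝ) < (P (k+1) : ℝ))).mp h1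
      exact_mod_cast this
    have hne : P (k + 1) ≠ P k := fun he => by
      have : k + 1 = k := P.injective he
      omega
    exact lt_of_le_of_ne hle hne
  have hC : ∀ m : ℕ, P (k0 + 1 + m) ≤ P (k0 + 1) - m := by
    intro m
    induction m with
    | zero => simp
    | succ n ih =>
      have hlt := hB (k0 + 1 + n) (by omega)
      have harg : (k0 + 1 + ((n : ℤ) + 1)) = (k0 + 1 + n) + 1 := by ring
      push_cast
      rw [harg]
      push_cast at ih
      omega
  have := hC (P (k0 + 1)).toNat
  have hpos := hA (k0 + 1 + (P (k0 + 1)).toNat) (by omega)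
  have hpos1 := hA (k0 + 1) (by omega)
  omega
end

section
/- If P and P' are two ranking permutations of the same rankable sequence x ∈ ℝ^ℤ (both nondecreasing along ranks and resolving ties in lexicographic order), then there exists m ∈ ℤ such that P(k) = P'(k + m) for all k ∈ ℤ. -/
/-- Two ranking permutations (nondecreasing along ranks, resolving ties lexicographically)
of the same sequence `x : ℤ → ℝ` differ by a shift. -/
theorem stmt_1 (x : ℤ → ℝ) (P P' : ℤ ≃ ℤ)
    (hP : ∀ k l : ℤ, k ≤ l → x (P k) ≤ x (P l))
    (hPlex : ∀ k l : ℤ, k < l → x (P k) = x (P l) → P k < P l)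
    (hP' : ∀ k l : ℤ, k ≤ l → x (P' k) ≤ x (P' l))
    (hP'lex : ∀ k l : ℤ, k < l → x (P' k) = x (P' l) → P' k < P' l) :
    ∃ m : ℤ, ∀ k : ℤ, P k = P' (k + m) := by
  set Q : ℤ ≃ ℤ := P.trans P'.symm with hQdef
  have hQapp : ∀ k, P' (Q k) = P k := by
    intro k
    simp [hQdef, Equiv.trans_apply]
  have hmono : StrictMono Q := by
    intro k l hkl
    by_contra h
    push_neg at h
    rcases eq_or_lt_of_le h with heq | hlt
    · have := Q.injective heq; omega
    · have h1 : x (P' (Q l)) ≤ x (P' (Q k)) := hP' _ _ hlt.le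
      rw [hQapp, hQapp] at h1
      have h2 : x (P k) ≤ x (P l) := hP _ _ hkl.le
      have he : x (P k) = x (P l) := le_antisymm h2 h1
      have h3 := hPlex _ _ hkl he
      have h4 := hP'lex _ _ hlt (by rw [hQapp, hQapp, he])
      rw [hQapp, hQapp] at h4
      omega
  have hstep : ∀ k : ℤ, Q (k + 1) = Q k + 1 := by
    intro k
    have h1 : Q k < Q (k + 1) := hmono (by omega)
    by_contra h
    have h2 : Q k + 1 < Q (k + 1) := by omega
    set j := Q.symm (Q k + 1) with hj
    have hQj : Q j = Q k + 1 := Q.apply_symm_apply _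
    rcases lt_trichotomy j k with hl | heq | hg
    · have := hmono hl; omega
    · rw [heq] at hQj; omega
    · have hj2 : k + 1 ≤ j := by omega
      rcases eq_or_lt_of_le hj2 with heq | hlt
      · rw [← heq] at hQj; exact h hQj
      · have := hmono hlt; omega
  refine ⟨Q 0, fun k => ?_⟩
  have hQk : Q k = k + Q 0 := by
    induction k using Int.induction_on with
    | zero => omega
    | succ n ih => rw [hstep]; omega
    | pred n ih =>
        have h := hstep (-(n : ℤ) - 1)
        rw [show -(n : ℤ) - 1 + 1 = -n by ring] at h
        omega
  rw [← hQapp k, hQk]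
end
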